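/- Let f be real-analytic near a simple root α (f(α)=0, f'(α)≠0). For x near α define the composed Newton iteration ψ(x) = z - ((f(x)+f(z))/(f(x)-f(z)))·(f(z)/f'(x)), where z = x - f(x)/f'(x). Then with e = x - α and A_k = f^{(k)}(α)/(k! f'(α)), one has ψ(x) - α = A₂(3A₂² - A₃)·e⁴ + O(e⁵) as x → α. -/

import Mathlib

open Filter Asymptotics Topology Metric Set

lemma analyticAt_deriv' {g : ℝ → ℝ} {α : ℝ} (h : AnalyticAt ℝ g α) :
    AnalyticAt ℝ (deriv g) α := by
  obtain ⟨r, hr, hball⟩ := Metric.eventually_nhds_iff_ball.1 h.eventually_analyticAt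
  exact (AnalyticOnNhd.deriv (fun y hy => hball y hy)) α (mem_ball_self hr)

lemma taylor_isBigO (n : ℕ) : ∀ (g : ℝ → ℝ) (α : ℝ), AnalyticAt ℝ g α →
    (fun x => g x - ∑ k ∈ Finset.range n,
        (iteratedDeriv k g α / (k.factorial : ℝ)) * (x - α) ^ k)
      =O[𝓝 α] (fun x => (x - α) ^ n) := by
  induction n with
  | zero =>
    intro g α hg
    simpa using hg.continuousAt.tendsto.isBigO_one ℝ
  | succ n ih =>
    intro g α hg
    have hd := ih (deriv g) α (analyticAt_deriv' hg)
    obtain ⟨C, hC0, hCev⟩ : ∃ C ≥ 0, ∀ᶠ x in 𝓝 α,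
        ‖deriv g x - ∑ k ∈ Finset.range n,
          (iteratedDeriv k (deriv g) α / (k.factorial : ℝ)) * (x - α) ^ k‖
          ≤ C * ‖(x - α) ^ n‖ := by
      obtain ⟨C, hC0, h⟩ := hd.exists_nonneg
      exact ⟨C, hC0, h.bound⟩
    obtain ⟨r, hr, hball⟩ := Metric.eventually_nhds_iff_ball.1
      (hCev.and hg.eventually_analyticAt)
    rw [isBigO_iff]
    refine ⟨C, Metric.eventually_nhds_iff_ball.2 ⟨r, hr, fun x hx => ?_⟩⟩
    set T : ℝ → ℝ := fun y => ∑ k ∈ Finset.range (n+1),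
      (iteratedDeriv k g α / (k.factorial : ℝ)) * (y - α) ^ k with hT
    set h' : ℝ → ℝ := fun y => deriv g y - ∑ k ∈ Finset.range n,
      (iteratedDeriv k (deriv g) α / (k.factorial : ℝ)) * (y - α) ^ k with hh'
    have key : ∀ t ∈ closedBall α |x - α|,
        HasDerivWithinAt (fun y => g y - T y) (h' t) (closedBall α |x - α|) t := by
      intro t ht
      have htball : t ∈ ball α r := by
        rw [mem_closedBall, Real.dist_eq] at ht
        rw [mem_ball] at hx ⊢
        exact lt_of_le_of_lt (by rw [Real.dist_eq]; exact le_trans ht (le_of_eq rfl)) hx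
      have hgt : AnalyticAt ℝ g t := (hball t htball).2
      have hTd : HasDerivAt T (∑ k ∈ Finset.range (n+1),
          (iteratedDeriv k g α / (k.factorial : ℝ)) * (k * (t - α) ^ (k-1) * 1)) t := by
        apply HasDerivAt.fun_sum
        intro k _
        exact (((hasDerivAt_id t).sub_const α).pow k).const_mul _
      have hsum : (∑ k ∈ Finset.range (n+1),
          (iteratedDeriv k g α / (k.factorial : ℝ)) * (k * (t - α) ^ (k-1) * 1))
          = ∑ k ∈ Finset.range n,
            (iteratedDeriv k (deriv g) α / (k.factorial : ℝ)) * (t - α) ^ k := by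
        rw [Finset.sum_range_succ']
        simp only [Nat.cast_zero, zero_mul, mul_zero, mul_one, add_zero]
        apply Finset.sum_congr rfl
        intro k _
        rw [← iteratedDeriv_succ']
        have : ((k+1).factorial : ℝ) = (k+1) * (k.factorial : ℝ) := by
          rw [Nat.factorial_succ]; push_cast; ring
        rw [this]
        have hk : ((k : ℝ) + 1) ≠ 0 := by positivity
        have hkf : ((k.factorial : ℝ)) ≠ 0 := by positivity
        field_simp
        rw [Nat.add_sub_cancel]
        push_cast
        ring
      have := (hgt.differentiableAt.hasDerivAt.sub (hsum ▸ hTd))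
      exact this.hasDerivWithinAt
    have bound : ∀ t ∈ closedBall α |x - α|, ‖h' t‖ ≤ C * ‖x - α‖ ^ n := by
      intro t ht
      have htball : t ∈ ball α r := by
        rw [mem_closedBall, Real.dist_eq] at ht
        rw [mem_ball, Real.dist_eq] at hx ⊢
        exact lt_of_le_of_lt ht hx
      have h1 := (hball t htball).1
      calc ‖h' t‖ ≤ C * ‖(t - α) ^ n‖ := h1
        _ ≤ C * ‖x - α‖ ^ n := by
            rw [norm_pow]
            apply mul_le_mul_of_nonneg_left _ hC0
            apply pow_le_pow_left₀ (norm_nonneg _)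
            rw [Real.norm_eq_abs, Real.norm_eq_abs]
            rw [mem_closedBall, Real.dist_eq] at ht
            exact ht
    have hmem_x : x ∈ closedBall α |x - α| := by
      rw [mem_closedBall, Real.dist_eq]
    have hmem_α : α ∈ closedBall α |x - α| := by
      rw [mem_closedBall, dist_self]; exact abs_nonneg _
    have mvt := (convex_closedBall α |x - α|).norm_image_sub_le_of_norm_hasDerivWithin_le
      key bound hmem_α hmem_x
    have hTα : T α = g α := by
      simp only [hT]
      rw [Finset.sum_eq_single 0]
      · simp [iteratedDeriv_zero]
      · intro k _ hk
        simp [sub_self, zero_pow hk]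
      · simp
    have : ‖g x - T x‖ ≤ C * ‖x - α‖ ^ n * ‖x - α‖ := by
      calc ‖g x - T x‖ = ‖(g x - T x) - (g α - T α)‖ := by rw [hTα]; simp
        _ ≤ C * ‖x - α‖ ^ n * ‖x - α‖ := mvt
    calc ‖g x - T x‖ ≤ C * ‖x - α‖ ^ n * ‖x - α‖ := this
      _ = C * ‖(x - α) ^ (n+1)‖ := by rw [norm_pow]; ring

open Filter Asymptotics Topology Metric Set

set_option maxHeartbeats 1000000 in
theorem composed_newton_error (f : ℝ → ℝ) (α : ℝ)
    (hf : AnalyticAt ℝ f α) (hroot : f α = 0) (hf' : deriv f α ≠ 0)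
    (z ψ : ℝ → ℝ)
    (hz : ∀ x, z x = x - f x / deriv f x)
    (hψ : ∀ x, ψ x = z x - ((f x + f (z x)) / (f x - f (z x))) * (f (z x) / deriv f x))
    (hreg : ∀ᶠ x in nhdsWithin α {α}ᶜ, deriv f x ≠ 0 ∧ f x ≠ f (z x)) :
    ∃ C > 0, ∃ δ > 0, ∀ x : ℝ, 0 < |x - α| → |x - α| < δ →
      |ψ x - α -
        (iteratedDeriv 2 f α / (2 * deriv f α)) *
          (3 * (iteratedDeriv 2 f α / (2 * deriv f α)) ^ 2
            - iteratedDeriv 3 f α / (6 * deriv f α)) * (x - α) ^ 4|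
        ≤ C * |x - α| ^ 5 := by
  set c1 : ℝ := deriv f α with hc1def
  set a : ℝ := iteratedDeriv 2 f α / (2 * c1) with hadef
  set b : ℝ := iteratedDeriv 3 f α / (6 * c1) with hbdef
  set d : ℝ := iteratedDeriv 4 f α / (24 * c1) with hddef
  set l : Filter ℝ := nhdsWithin α {α}ᶜ with hldef
  set u : ℝ → ℝ := fun x => x - α with hudef
  set K : ℝ := a * (3 * a ^ 2 - b) with hKdef
  -- coefficient identities
  have h2 : iteratedDeriv 2 f α = 2 * c1 * a := by rw [hadef]; field_simp
  have h3 : iteratedDeriv 3 f α = 6 * c1 * b := by rw [hbdef]; field_simp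
  have h4 : iteratedDeriv 4 f α = 24 * c1 * d := by rw [hddef]; field_simp
  -- named polynomial functions
  set F : ℝ → ℝ := fun x => c1 * (u x + a * u x ^ 2 + b * u x ^ 3 + d * u x ^ 4) with hFdef
  set Fp : ℝ → ℝ := fun x => c1 * (1 + 2*a*u x + 3*b*u x ^ 2 + 4*d*u x ^ 3) with hFpdef
  set G : ℝ → ℝ := fun x => c1 * (a * u x ^ 2 + 2*b*u x ^ 3 + 3*d*u x ^ 4) with hGdef
  set W : ℝ → ℝ := fun x => a * u x ^ 2 + (2*b - 2*a^2) * u x ^ 3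
      + (4*a^3 - 7*a*b + 3*d) * u x ^ 4 with hWdef
  set Q : ℝ → ℝ := fun x => c1 * (W x + a^3 * u x ^ 4) with hQdef
  set w : ℝ → ℝ := fun x => z x - α with hwdef
  set fz : ℝ → ℝ := fun x => f (z x) with hfzdef
  set N : ℝ → ℝ := fun x => (u x * deriv f x - f x) * (f x - fz x) - (f x + fz x) * fz x
    with hNdef
  set D : ℝ → ℝ := fun x => (f x - fz x) * deriv f x with hDdef
  -- basic tendsto facts
  have huten : Tendsto u l (𝓝 0) := by
    have : Tendsto u (𝓝 α) (𝓝 (α - α)) := (continuous_id.sub continuous_const).tendsto α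
    rw [sub_self] at this
    exact this.mono_left nhdsWithin_le_nhds
  have husmall : ∀ᶠ x in l, |u x| ≤ 1 := by
    have h0 : Tendsto (fun x => |u x|) l (𝓝 0) := by simpa using huten.abs
    exact (h0.eventually_lt_const (by norm_num : (0:ℝ) < 1)).mono fun x hx => hx.le
  -- power comparison
  have hupow : ∀ m k : ℕ, k ≤ m → (fun x => u x ^ m) =O[l] (fun x => u x ^ k) := by
    intro m k hkm
    rw [isBigO_iff]
    refine ⟨1, husmall.mono fun x hx => ?_⟩
    rw [one_mul, norm_pow, norm_pow]
    exact pow_le_pow_of_le_one (norm_nonneg _) (by simpa using hx) hkm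
  -- O of u^m times continuous function
  have hkey : ∀ (m : ℕ) (g : ℝ → ℝ), ContinuousAt g α →
      (fun x => u x ^ m * g x) =O[l] (fun x => u x ^ m) := by
    intro m g hg
    have h1 : g =O[l] (fun _ => (1:ℝ)) :=
      (hg.tendsto.mono_left nhdsWithin_le_nhds).isBigO_one ℝ
    have := (isBigO_refl (fun x => u x ^ m) l).mul h1
    simpa using this
  have hcontpoly : ∀ (e0 e1 e2 e3 : ℝ),
      ContinuousAt (fun x => e0 + e1 * u x + e2 * u x ^ 2 + e3 * u x ^ 3) α := by
    intro e0 e1 e2 e3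
    fun_prop
  -- Taylor expansions
  have hderiv_an : AnalyticAt ℝ (deriv f) α := by
    obtain ⟨r, hr, hball⟩ := Metric.eventually_nhds_iff_ball.1 hf.eventually_analyticAt
    exact (AnalyticOnNhd.deriv (fun y hy => hball y hy)) α (mem_ball_self hr)
  have hF5 : (fun x => f x - F x) =O[l] (fun x => u x ^ 5) := by
    have ht := taylor_isBigO 5 f α hf
    have heq : ∀ x, (f x - ∑ k ∈ Finset.range 5,
        (iteratedDeriv k f α / (k.factorial : ℝ)) * (x - α) ^ k) = f x - F x := by
      intro x
      simp only [Finset.sum_range_succ, Finset.sum_range_zero, hFdef, hudef,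
        iteratedDeriv_zero, iteratedDeriv_one, hroot, h2, h3, h4, Nat.factorial]
      push_cast
      ring
    exact ((ht.mono nhdsWithin_le_nhds).congr heq (fun x => rfl))
  have hFp4 : (fun x => deriv f x - Fp x) =O[l] (fun x => u x ^ 4) := by
    have ht := taylor_isBigO 4 (deriv f) α hderiv_an
    have e1 : iteratedDeriv 1 (deriv f) α = 2 * c1 * a := by
      have : iteratedDeriv (1+1) f = iteratedDeriv 1 (deriv f) := iteratedDeriv_succ'
      rw [← this]; exact h2
    have e2 : iteratedDeriv 2 (deriv f) α = 6 * c1 * b := by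
      have : iteratedDeriv (2+1) f = iteratedDeriv 2 (deriv f) := iteratedDeriv_succ'
      rw [← this]; exact h3
    have e3 : iteratedDeriv 3 (deriv f) α = 24 * c1 * d := by
      have : iteratedDeriv (3+1) f = iteratedDeriv 3 (deriv f) := iteratedDeriv_succ'
      rw [← this]; exact h4
    have heq : ∀ x, (deriv f x - ∑ k ∈ Finset.range 4,
        (iteratedDeriv k (deriv f) α / (k.factorial : ℝ)) * (x - α) ^ k)
        = deriv f x - Fp x := by
      intro x
      simp only [Finset.sum_range_succ, Finset.sum_range_zero, hFpdef, hudef,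
        iteratedDeriv_zero, e1, e2, e3, ← hc1def, Nat.factorial]
      push_cast
      ring
    exact ((ht.mono nhdsWithin_le_nhds).congr heq (fun x => rfl))
  -- derivative bounded below
  have hf'cont : ContinuousAt (deriv f) α := hderiv_an.continuousAt
  have hf'low : ∀ᶠ x in l, |c1| / 2 < |deriv f x| := by
    have : Tendsto (fun x => |deriv f x|) l (𝓝 |c1|) :=
      ((hf'cont.tendsto).mono_left nhdsWithin_le_nhds).abs
    exact this.eventually_const_lt (half_lt_self (abs_pos.2 hf'))
  have hq : ∀ᶠ x in l, deriv f x ≠ 0 := by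
    refine hf'low.mono fun x hx => ?_
    intro h0
    rw [h0, abs_zero] at hx
    have : (0:ℝ) < |c1| / 2 := by positivity
    linarith
  have hinv : (fun x => (deriv f x)⁻¹) =O[l] (fun _ => (1:ℝ)) := by
    rw [isBigO_iff]
    refine ⟨2 / |c1|, hf'low.mono fun x hx => ?_⟩
    rw [Real.norm_eq_abs, abs_inv, norm_one, mul_one,
      inv_le_comm₀ (lt_trans (by positivity) hx) (by positivity), inv_div]
    linarith
  -- division helper: if num =O u^k then num / deriv f =O u^k
  have hdiv : ∀ (g : ℝ → ℝ) (k : ℕ), g =O[l] (fun x => u x ^ k) →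
      (fun x => g x / deriv f x) =O[l] (fun x => u x ^ k) := by
    intro g k hgk
    have := hgk.mul hinv
    simpa [div_eq_mul_inv] using this
  -- u * deriv f - f expansion
  have hUF5 : (fun x => u x * deriv f x - f x - G x) =O[l] (fun x => u x ^ 5) := by
    have h1 : (fun x => u x * (deriv f x - Fp x)) =O[l] (fun x => u x ^ 5) := by
      have := (isBigO_refl u l).mul hFp4
      refine this.congr (fun x => rfl) (fun x => ?_)
      ring
    have h2 := h1.sub hF5
    refine h2.congr (fun x => ?_) (fun x => rfl)
    simp only [hGdef, hFpdef, hFdef]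
    ring
  have hGO2 : G =O[l] (fun x => u x ^ 2) := by
    have := hkey 2 (fun x => c1 * (a + 2*b*u x + 3*d*u x ^ 2)) (by fun_prop)
    refine this.congr (fun x => ?_) (fun x => rfl)
    simp only [hGdef]; ring
  have hUF2 : (fun x => u x * deriv f x - f x) =O[l] (fun x => u x ^ 2) := by
    have := (hUF5.trans (hupow 5 2 (by norm_num))).add hGO2
    refine this.congr (fun x => ?_) (fun x => rfl)
    ring
  -- w = z - α
  have hwq : w =ᶠ[l] (fun x => (u x * deriv f x - f x) / deriv f x) := by
    refine hq.mono fun x hx => ?_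
    simp only [hwdef, hz x, hudef]
    field_simp
    ring
  have hw1 : w =O[l] (fun x => u x ^ 2) :=
    (hdiv _ 2 hUF2).congr' hwq.symm EventuallyEq.rfl
  have hwten : Tendsto w l (𝓝 0) := hw1.trans_tendsto (by
    have := huten.pow 2
    simpa using this)
  have hzten : Tendsto z l (𝓝 α) := by
    have := hwten.add_const α
    rw [zero_add] at this
    refine this.congr fun x => ?_
    simp [hwdef]
  -- iteration identity
  have hwid : ∀ᶠ x in l, c1 * w x = (u x * deriv f x - f x) - w x * (deriv f x - c1) := by
    refine hq.mono fun x hx => ?_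
    have : w x * deriv f x = u x * deriv f x - f x := by
      simp only [hwdef, hz x, hudef]
      field_simp
      ring
    linarith [this]
  -- deriv f - c1 partial expansions
  have hFp1 : (fun x => deriv f x - c1) =O[l] (fun x => u x ^ 1) := by
    have h1 : (fun x => Fp x - c1) =O[l] (fun x => u x ^ 1) := by
      have := hkey 1 (fun x => c1 * (2*a + 3*b*u x + 4*d*u x ^ 2)) (by fun_prop)
      refine this.congr (fun x => ?_) (fun x => rfl)
      simp only [hFpdef]; ring
    have := (hFp4.trans (hupow 4 1 (by norm_num))).add h1
    refine this.congr (fun x => ?_) (fun x => rfl)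
    ring
  have hFp2 : (fun x => deriv f x - c1 - 2*c1*a*u x) =O[l] (fun x => u x ^ 2) := by
    have h1 : (fun x => Fp x - c1 - 2*c1*a*u x) =O[l] (fun x => u x ^ 2) := by
      have := hkey 2 (fun x => c1 * (3*b + 4*d*u x)) (by fun_prop)
      refine this.congr (fun x => ?_) (fun x => rfl)
      simp only [hFpdef]; ring
    have := (hFp4.trans (hupow 4 2 (by norm_num))).add h1
    refine this.congr (fun x => ?_) (fun x => rfl)
    ring
  have hFp3 : (fun x => deriv f x - c1 - 2*c1*a*u x - 3*c1*b*u x ^ 2) =O[l]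
      (fun x => u x ^ 3) := by
    have h1 : (fun x => Fp x - c1 - 2*c1*a*u x - 3*c1*b*u x ^ 2) =O[l]
        (fun x => u x ^ 3) := by
      have := hkey 3 (fun x => c1 * (4*d)) (by fun_prop)
      refine this.congr (fun x => ?_) (fun x => rfl)
      simp only [hFpdef]; ring
    have := (hFp4.trans (hupow 4 3 (by norm_num))).add h1
    refine this.congr (fun x => ?_) (fun x => rfl)
    ring
  -- iteration 2
  have hw2 : (fun x => w x - a * u x ^ 2) =O[l] (fun x => u x ^ 3) := by
    have hbig : (fun x => (u x * deriv f x - f x - G x)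
        + (G x - c1 * a * u x ^ 2) - w x * (deriv f x - c1)) =O[l]
        (fun x => u x ^ 3) := by
      have t1 := hUF5.trans (hupow 5 3 (by norm_num))
      have t2 : (fun x => G x - c1 * a * u x ^ 2) =O[l] (fun x => u x ^ 3) := by
        have := hkey 3 (fun x => c1 * (2*b + 3*d*u x)) (by fun_prop)
        refine this.congr (fun x => ?_) (fun x => rfl)
        simp only [hGdef]; ring
      have t3 : (fun x => w x * (deriv f x - c1)) =O[l] (fun x => u x ^ 3) := by
        have := hw1.mul hFp1
        refine this.trans ?_
        refine (isBigO_refl _ _).congr (fun x => rfl) (fun x => ?_)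
        ring
      exact (t1.add t2).sub t3
    have hev : (fun x => (u x * deriv f x - f x - G x)
        + (G x - c1 * a * u x ^ 2) - w x * (deriv f x - c1))
        =ᶠ[l] (fun x => c1 * (w x - a * u x ^ 2)) := by
      refine hwid.mono fun x hx => ?_
      linear_combination -hx
    have := hbig.congr' hev EventuallyEq.rfl
    have := this.const_mul_left c1⁻¹
    refine this.congr (fun x => ?_) (fun x => rfl)
    exact inv_mul_cancel_left₀ hf' _
  -- iteration 3
  have hw3 : (fun x => w x - (a * u x ^ 2 + (2*b - 2*a^2) * u x ^ 3)) =O[l]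
      (fun x => u x ^ 4) := by
    have hbig : (fun x => (u x * deriv f x - f x - G x)
        + (G x - c1 * a * u x ^ 2 - 2*c1*b*u x ^ 3)
        - (w x - a * u x ^ 2) * (deriv f x - c1)
        - a * u x ^ 2 * (deriv f x - c1 - 2*c1*a*u x)
        + 2*c1*a^2*u x ^ 3 - 2*c1*a^2*u x ^ 3) =O[l] (fun x => u x ^ 4) := by
      have t1 := hUF5.trans (hupow 5 4 (by norm_num))
      have t2 : (fun x => G x - c1 * a * u x ^ 2 - 2*c1*b*u x ^ 3) =O[l]
          (fun x => u x ^ 4) := by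
        have := hkey 4 (fun _ => c1 * (3*d)) (by fun_prop)
        refine this.congr (fun x => ?_) (fun x => rfl)
        simp only [hGdef]; ring
      have t3 : (fun x => (w x - a * u x ^ 2) * (deriv f x - c1)) =O[l]
          (fun x => u x ^ 4) := by
        have := hw2.mul hFp1
        refine this.trans ?_
        refine (isBigO_refl _ _).congr (fun x => rfl) (fun x => ?_)
        ring
      have t4 : (fun x => a * u x ^ 2 * (deriv f x - c1 - 2*c1*a*u x)) =O[l]
          (fun x => u x ^ 4) := by
        have h5 : (fun x => u x ^ 2) =O[l] (fun x => u x ^ 2) := isBigO_refl _ _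
        have := (h5.mul hFp2).const_mul_left a
        refine this.congr (fun x => by ring) (fun x => by ring)
      have := (((t1.add t2).sub t3).sub t4)
      refine this.congr (fun x => by ring) (fun x => rfl)
    have hev : (fun x => (u x * deriv f x - f x - G x)
        + (G x - c1 * a * u x ^ 2 - 2*c1*b*u x ^ 3)
        - (w x - a * u x ^ 2) * (deriv f x - c1)
        - a * u x ^ 2 * (deriv f x - c1 - 2*c1*a*u x)
        + 2*c1*a^2*u x ^ 3 - 2*c1*a^2*u x ^ 3)
        =ᶠ[l] (fun x => c1 * (w x - (a * u x ^ 2 + (2*b - 2*a^2) * u x ^ 3))) := by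
      refine hwid.mono fun x hx => ?_
      linear_combination -hx
    have := (hbig.congr' hev EventuallyEq.rfl).const_mul_left c1⁻¹
    refine this.congr (fun x => ?_) (fun x => rfl)
    exact inv_mul_cancel_left₀ hf' _
    -- iteration 4
  have hw4 : (fun x => w x - W x) =O[l] (fun x => u x ^ 5) := by
    have hbig : (fun x => (u x * deriv f x - f x - G x)
        + (G x - c1 * W x
            - (a * u x ^ 2 + (2*b - 2*a^2) * u x ^ 3) * (2*c1*a*u x + 3*c1*b*u x ^ 2))
        - (w x - (a * u x ^ 2 + (2*b - 2*a^2) * u x ^ 3)) * (deriv f x - c1)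
        - (a * u x ^ 2 + (2*b - 2*a^2) * u x ^ 3)
            * (deriv f x - c1 - 2*c1*a*u x - 3*c1*b*u x ^ 2)) =O[l]
        (fun x => u x ^ 5) := by
      have t1 := hUF5
      have t2 : (fun x => G x - c1 * W x
          - (a * u x ^ 2 + (2*b - 2*a^2) * u x ^ 3) * (2*c1*a*u x + 3*c1*b*u x ^ 2))
          =O[l] (fun x => u x ^ 5) := by
        have := hkey 5 (fun _ => -3*c1*b*(2*b - 2*a^2)) (by fun_prop)
        refine this.congr (fun x => ?_) (fun x => rfl)
        simp only [hGdef, hWdef]; ring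
      have t3 : (fun x => (w x - (a * u x ^ 2 + (2*b - 2*a^2) * u x ^ 3))
          * (deriv f x - c1)) =O[l] (fun x => u x ^ 5) := by
        have := hw3.mul hFp1
        refine this.trans <| (isBigO_refl _ _).congr (fun x => rfl) (fun x => by ring)
      have t4 : (fun x => (a * u x ^ 2 + (2*b - 2*a^2) * u x ^ 3)
          * (deriv f x - c1 - 2*c1*a*u x - 3*c1*b*u x ^ 2)) =O[l]
          (fun x => u x ^ 5) := by
        have hlow : (fun x => a * u x ^ 2 + (2*b - 2*a^2) * u x ^ 3) =O[l]
            (fun x => u x ^ 2) := by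
          have := hkey 2 (fun x => a + (2*b - 2*a^2) * u x) (by fun_prop)
          refine this.congr (fun x => by ring) (fun x => rfl)
        have := hlow.mul hFp3
        refine this.trans <| (isBigO_refl _ _).congr (fun x => rfl) (fun x => by ring)
      exact ((t1.add t2).sub t3).sub t4
    have hev : (fun x => (u x * deriv f x - f x - G x)
        + (G x - c1 * W x
            - (a * u x ^ 2 + (2*b - 2*a^2) * u x ^ 3) * (2*c1*a*u x + 3*c1*b*u x ^ 2))
        - (w x - (a * u x ^ 2 + (2*b - 2*a^2) * u x ^ 3)) * (deriv f x - c1)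
        - (a * u x ^ 2 + (2*b - 2*a^2) * u x ^ 3)
            * (deriv f x - c1 - 2*c1*a*u x - 3*c1*b*u x ^ 2))
        =ᶠ[l] (fun x => c1 * (w x - W x)) := by
      refine hwid.mono fun x hx => ?_
      simp only [hWdef]
      linear_combination -hx
    have := (hbig.congr' hev EventuallyEq.rfl).const_mul_left c1⁻¹
    refine this.congr (fun x => ?_) (fun x => rfl)
    exact inv_mul_cancel_left₀ hf' _
  -- composition: Taylor of f at z x
  have hF5n : (fun y => f y - F y) =O[𝓝 α] (fun y => u y ^ 5) := by
    have ht := taylor_isBigO 5 f α hf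
    have heq : ∀ y, (f y - ∑ k ∈ Finset.range 5,
        (iteratedDeriv k f α / (k.factorial : ℝ)) * (y - α) ^ k) = f y - F y := by
      intro y
      simp only [Finset.sum_range_succ, Finset.sum_range_zero, hFdef, hudef,
        iteratedDeriv_zero, iteratedDeriv_one, hroot, h2, h3, h4, Nat.factorial]
      push_cast
      ring
    exact ht.congr heq (fun y => rfl)
  obtain ⟨Cf, hCf⟩ := isBigO_iff.1 hF5n
  have hfzP : (fun x => fz x - F (z x)) =O[l] (fun x => w x ^ 5) := by
    rw [isBigO_iff]
    refine ⟨Cf, (hzten.eventually hCf).mono fun x hx => ?_⟩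
    simpa [hfzdef, hudef, hwdef] using hx
  have hw5O : (fun x => w x ^ 5) =O[l] (fun x => u x ^ 5) := by
    have h1 : (fun x => (u x ^ 2) ^ 5) =O[l] (fun x => u x ^ 5) := by
      refine ((isBigO_refl (fun x => u x ^ 10) l).trans
        (hupow 10 5 (by norm_num))).congr (fun x => by ring) (fun x => rfl)
    exact (hw1.pow 5).trans h1
  have hfzF : (fun x => fz x - F (z x)) =O[l] (fun x => u x ^ 5) := hfzP.trans hw5O
  have hWO2 : W =O[l] (fun x => u x ^ 2) := by
    have := hkey 2 (fun x => a + (2*b - 2*a^2) * u x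
      + (4*a^3 - 7*a*b + 3*d) * u x ^ 2) (by fun_prop)
    refine this.congr (fun x => ?_) (fun x => rfl)
    simp only [hWdef]; ring
  have hfzQ : (fun x => fz x - Q x) =O[l] (fun x => u x ^ 5) := by
    have s2 := hw4.const_mul_left c1
    have s3 : (fun x => c1 * a * ((w x - W x) * (w x + W x))) =O[l]
        (fun x => u x ^ 5) := by
      have := (hw4.mul (hw1.add hWO2)).const_mul_left (c1*a)
      refine this.trans <| (isBigO_refl _ _).congr (fun x => rfl) (fun x => by ring)
        |>.trans (hupow 7 5 (by norm_num))
    have s4 : (fun x => c1 * b * w x ^ 3) =O[l] (fun x => u x ^ 5) := by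
      have := (hw1.pow 3).const_mul_left (c1*b)
      refine this.trans <| ((isBigO_refl _ _).congr (fun x => rfl)
        (fun x => by ring : ∀ x, (u x ^ 2) ^ 3 = u x ^ 6)).trans
        (hupow 6 5 (by norm_num))
    have s5 : (fun x => c1 * d * w x ^ 4) =O[l] (fun x => u x ^ 5) := by
      have := (hw1.pow 4).const_mul_left (c1*d)
      refine this.trans <| ((isBigO_refl _ _).congr (fun x => rfl)
        (fun x => by ring : ∀ x, (u x ^ 2) ^ 4 = u x ^ 8)).trans
        (hupow 8 5 (by norm_num))
    have s6 : (fun x => c1 * (a * W x ^ 2 - a^3 * u x ^ 4)) =O[l]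
        (fun x => u x ^ 5) := by
      have := hkey 5 (fun x => c1 * (a * (2*a*(2*b - 2*a^2)
        + (2*a*(4*a^3 - 7*a*b + 3*d) + (2*b - 2*a^2)^2) * u x
        + 2*(2*b - 2*a^2)*(4*a^3 - 7*a*b + 3*d) * u x ^ 2
        + (4*a^3 - 7*a*b + 3*d)^2 * u x ^ 3))) (by fun_prop)
      refine this.congr (fun x => ?_) (fun x => rfl)
      simp only [hWdef]; ring
    have hsum := ((((hfzF.add s2).add s3).add s4).add s5).add s6
    refine hsum.congr (fun x => ?_) (fun x => rfl)
    simp only [hfzdef, hFdef, hQdef, hWdef, hudef, hwdef]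
    ring
  -- coarse bounds
  have hQO2 : Q =O[l] (fun x => u x ^ 2) := by
    have := hkey 2 (fun x => c1 * (a + (2*b - 2*a^2) * u x
      + (4*a^3 - 7*a*b + 3*d + a^3) * u x ^ 2)) (by fun_prop)
    refine this.congr (fun x => ?_) (fun x => rfl)
    simp only [hQdef, hWdef]; ring
  have hFO1 : F =O[l] (fun x => u x ^ 1) := by
    have := hkey 1 (fun x => c1 * (1 + a * u x + b * u x ^ 2 + d * u x ^ 3))
      (by fun_prop)
    refine this.congr (fun x => ?_) (fun x => rfl)
    simp only [hFdef]; ring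
  have hfO1 : f =O[l] (fun x => u x ^ 1) := by
    have := (hF5.trans (hupow 5 1 (by norm_num))).add hFO1
    refine this.congr (fun x => by ring) (fun x => rfl)
  have hfzO2 : fz =O[l] (fun x => u x ^ 2) := by
    have := (hfzQ.trans (hupow 5 2 (by norm_num))).add hQO2
    refine this.congr (fun x => by ring) (fun x => rfl)
  have hffz1 : (fun x => f x - fz x) =O[l] (fun x => u x ^ 1) :=
    hfO1.sub (hfzO2.trans (hupow 2 1 (by norm_num)))
  have hFQO1 : (fun x => F x + Q x) =O[l] (fun x => u x ^ 1) :=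
    hFO1.add (hQO2.trans (hupow 2 1 (by norm_num)))
  -- N expansion
  set PN : ℝ → ℝ := fun x => G x * (F x - Q x) - (F x + Q x) * Q x with hPNdef
  have hN6 : (fun x => N x - PN x) =O[l] (fun x => u x ^ 6) := by
    have n1 : (fun x => (u x * deriv f x - f x - G x) * (f x - fz x)) =O[l]
        (fun x => u x ^ 6) := by
      refine (hUF5.mul hffz1).trans <|
        (isBigO_refl _ _).congr (fun x => rfl) (fun x => by ring)
    have n2 : (fun x => G x * ((f x - F x) - (fz x - Q x))) =O[l]
        (fun x => u x ^ 6) := by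
      refine ((hGO2.mul (hF5.sub hfzQ)).trans <|
        (isBigO_refl _ _).congr (fun x => rfl) (fun x => by ring)).trans
        (hupow 7 6 (by norm_num))
    have n3 : (fun x => ((f x - F x) + (fz x - Q x)) * fz x) =O[l]
        (fun x => u x ^ 6) := by
      refine (((hF5.add hfzQ).mul hfzO2).trans <|
        (isBigO_refl _ _).congr (fun x => rfl) (fun x => by ring)).trans
        (hupow 7 6 (by norm_num))
    have n4 : (fun x => (F x + Q x) * (fz x - Q x)) =O[l] (fun x => u x ^ 6) := by
      refine (hFQO1.mul hfzQ).trans <|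
        (isBigO_refl _ _).congr (fun x => rfl) (fun x => by ring)
    have := ((n1.add n2).sub n3).sub n4
    refine this.congr (fun x => ?_) (fun x => rfl)
    simp only [hNdef, hPNdef]
    ring
  have hPN5 : (fun x => PN x - K * c1^2 * u x ^ 5) =O[l] (fun x => u x ^ 6) := by
    have := hkey 6 (fun x => c1^2 * ((-8*b^2 - 12*a*d + 42*a^2*b - 24*a^4)
      + (-24*b*d + 49*a*b^2 + 20*a^2*d - 63*a^3*b + 20*a^5) * u x
      + (-18*d^2 + 70*a*b*d - 49*a^2*b^2 - 50*a^3*d + 70*a^4*b - 25*a^6) * u x ^ 2))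
      (by fun_prop)
    refine this.congr (fun x => ?_) (fun x => rfl)
    simp only [hPNdef, hGdef, hFdef, hQdef, hWdef, hKdef]
    ring
  -- D expansion
  have hf'O1 : (fun x => deriv f x) =O[l] (fun _ => (1:ℝ)) :=
    (hf'cont.tendsto.mono_left nhdsWithin_le_nhds).isBigO_one ℝ
  have hD2 : (fun x => D x - c1^2 * u x) =O[l] (fun x => u x ^ 2) := by
    have hsub : (fun x => f x - fz x - c1 * u x) =O[l] (fun x => u x ^ 2) := by
      have hpoly : (fun x => F x - Q x - c1 * u x) =O[l] (fun x => u x ^ 2) := by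
        have := hkey 2 (fun x => c1 * ((b - (2*b - 2*a^2)) * u x
          + (d - (4*a^3 - 7*a*b + 3*d) - a^3) * u x ^ 2)) (by fun_prop)
        refine this.congr (fun x => ?_) (fun x => rfl)
        simp only [hFdef, hQdef, hWdef]; ring
      have := ((hF5.sub hfzQ).trans (hupow 5 2 (by norm_num))).add hpoly
      refine this.congr (fun x => by ring) (fun x => rfl)
    have t1 : (fun x => (f x - fz x - c1 * u x) * deriv f x) =O[l]
        (fun x => u x ^ 2) := by
      have := hsub.mul hf'O1
      simpa using this
    have t2 : (fun x => c1 * (u x * (deriv f x - c1))) =O[l] (fun x => u x ^ 2) := by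
      have := ((isBigO_refl u l).mul hFp1).const_mul_left c1
      refine this.trans <| (isBigO_refl _ _).congr (fun x => rfl) (fun x => by ring)
    have := t1.add t2
    refine this.congr (fun x => ?_) (fun x => rfl)
    simp only [hDdef]
    ring
  -- lower bound for D
  obtain ⟨CD, hCD0, hCDW⟩ := hD2.exists_nonneg
  have hCDb := hCDW.bound
  have husm2 : ∀ᶠ x in l, |u x| ≤ c1^2 / (2*(CD+1)) := by
    have h0 : Tendsto (fun x => |u x|) l (𝓝 0) := by simpa using huten.abs
    exact (h0.eventually_lt_const (by positivity)).mono fun x hx => hx.le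
  have hDlow : ∀ᶠ x in l, c1^2/2 * |u x| ≤ |D x| := by
    filter_upwards [hCDb, husm2] with x hb hu2
    have hb' : |D x - c1^2 * u x| ≤ (CD+1) * |u x|^2 := by
      have : ‖D x - c1^2 * u x‖ ≤ CD * ‖u x ^ 2‖ := hb
      rw [Real.norm_eq_abs, Real.norm_eq_abs, abs_pow] at this
      nlinarith [abs_nonneg (u x), pow_nonneg (abs_nonneg (u x)) 2]
    have habs : |c1^2 * u x| - |D x| ≤ |D x - c1^2 * u x| := by
      have := abs_sub_abs_le_abs_sub (c1^2 * u x) (D x)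
      rw [abs_sub_comm] at this
      linarith
    have h1 : |c1^2 * u x| = c1^2 * |u x| := by
      rw [abs_mul, abs_of_nonneg (sq_nonneg c1)]
    have h2 : (CD+1) * |u x|^2 ≤ c1^2/2 * |u x| := by
      have h3 : (CD+1) * |u x| ≤ c1^2/2 := by
        calc (CD+1) * |u x| ≤ (CD+1) * (c1^2 / (2*(CD+1))) :=
              mul_le_mul_of_nonneg_left hu2 (by positivity)
          _ = c1^2/2 := by field_simp
      calc (CD+1) * |u x|^2 = ((CD+1) * |u x|) * |u x| := by ring
        _ ≤ (c1^2/2) * |u x| := mul_le_mul_of_nonneg_right h3 (abs_nonneg _)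
    linarith
  -- numerator estimate
  have hNum : (fun x => N x - K * u x ^ 4 * D x) =O[l] (fun x => u x ^ 6) := by
    have t3 : (fun x => K * (u x ^ 4 * (c1^2 * u x - D x))) =O[l]
        (fun x => u x ^ 6) := by
      have hDneg : (fun x => c1^2 * u x - D x) =O[l] (fun x => u x ^ 2) := by
        have := hD2.neg_left
        refine this.congr (fun x => by ring) (fun x => rfl)
      have := ((isBigO_refl (fun x => u x ^ 4) l).mul hDneg).const_mul_left K
      refine this.trans <| (isBigO_refl _ _).congr (fun x => rfl) (fun x => by ring)
    have := (hN6.add hPN5).add t3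
    refine this.congr (fun x => ?_) (fun x => rfl)
    ring
  obtain ⟨CN, hCN0, hCNW⟩ := hNum.exists_nonneg
  have hCNb := hCNW.bound
  have hne : ∀ᶠ x in l, x ∈ ({α}ᶜ : Set ℝ) := self_mem_nhdsWithin
  -- final eventual bound
  have hfinal : ∀ᶠ x in l, |ψ x - α - K * u x ^ 4| ≤ (2*CN/c1^2 + 1) * |u x|^5 := by
    filter_upwards [hreg, hDlow, hCNb, hq, hne] with x hx hlow hb hfx hxa
    have hxne : x ≠ α := hxa
    have hupos : 0 < |u x| := by
      simp only [hudef]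
      exact abs_pos.2 (sub_ne_zero.2 hxne)
    have hD0 : D x ≠ 0 := by
      intro h0
      rw [h0, abs_zero] at hlow
      nlinarith [sq_nonneg c1, mul_pos (by positivity : (0:ℝ) < c1^2/2) hupos,
        (by positivity : (0:ℝ) < c1^2/2)]
    have hfzne : f x - f (z x) ≠ 0 := sub_ne_zero.2 hx.2
    have hkeyeq : ψ x - α - K * u x ^ 4 = (N x - K * u x ^ 4 * D x) / D x := by
      have hwf : (z x - α) * deriv f x = (x - α) * deriv f x - f x := by
        rw [hz x]; field_simp; ring
      have hDx : D x = (f x - f (z x)) * deriv f x := by simp [hDdef, hfzdef]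
      have hNx : N x = ((x - α) * deriv f x - f x) * (f x - f (z x))
          - (f x + f (z x)) * f (z x) := by simp [hNdef, hfzdef, hudef]
      have step2 : ψ x - α = N x / D x := by
        rw [hψ x, hNx, hDx]
        field_simp
        linear_combination (f x - f (z x)) * hwf
      rw [step2, eq_div_iff hD0, sub_mul, div_mul_cancel₀ _ hD0]
    rw [hkeyeq, abs_div]
    have hb' : |N x - K * u x ^ 4 * D x| ≤ CN * |u x|^6 := by
      have : ‖N x - K * u x ^ 4 * D x‖ ≤ CN * ‖u x ^ 6‖ := hb
      rwa [Real.norm_eq_abs, Real.norm_eq_abs, abs_pow] at this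
    have hDpos : 0 < |D x| := abs_pos.2 hD0
    calc |N x - K * u x ^ 4 * D x| / |D x|
        ≤ (CN * |u x|^6) / (c1^2/2 * |u x|) := by
          apply div_le_div₀ (by positivity) hb' (by positivity) hlow
      _ = (2*CN/c1^2) * |u x|^5 := by
          field_simp
      _ ≤ (2*CN/c1^2 + 1) * |u x|^5 := by
          have : (0:ℝ) ≤ |u x|^5 := by positivity
          nlinarith
  -- convert to explicit δ
  rw [Filter.eventually_iff, hldef, Metric.mem_nhdsWithin_iff] at hfinal
  obtain ⟨δ, hδpos, hδ⟩ := hfinal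
  refine ⟨2*CN/c1^2 + 1, by positivity, δ, hδpos, fun x hx0 hxδ => ?_⟩
  have hxα : x ≠ α := by
    intro h
    rw [h, sub_self, abs_zero] at hx0
    exact lt_irrefl 0 hx0
  have hmem : x ∈ ball α δ ∩ {α}ᶜ := by
    constructor
    · rw [mem_ball, Real.dist_eq]; exact hxδ
    · exact hxα
  have := hδ hmem
  simp only [mem_setOf_eq, hudef] at this
  convert this using 3
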